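/- There exists a scattered ω-algebraic domain X (with the Scott topology) and subsets A, B ⊆ X such that A, B, X\A, X\B are pairwise incomparable under Wadge reducibility, i.e., none is the continuous preimage of another. -/

import Mathlib

/-- A set is Scott open: it is upward closed and every nonempty directed set whose
supremum lies in it meets it. -/
def ScottOpen {X : Type*} [Preorder X] (U : Set X) : Prop :=
  IsUpperSet U ∧ ∀ d : Set X, d.Nonempty → DirectedOn (· ≤ ·) d →
    ∀ a : X, IsLUB d a → a ∈ U → (d ∩ U).Nonempty

/-- An ω-algebraic domain with the Scott topology: a dcpo whose topology is the Scott
topology, whose set of compact elements is countable, and whose compact elements'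
upward closures form a basis of the topology. -/
def IsOmegaAlgebraicDomain (X : Type*) [PartialOrder X] [TopologicalSpace X] : Prop :=
  (∀ d : Set X, d.Nonempty → DirectedOn (· ≤ ·) d → ∃ a : X, IsLUB d a) ∧
  (∀ U : Set X, IsOpen U ↔ ScottOpen U) ∧
  {c : X | IsOpen {x : X | c ≤ x}}.Countable ∧
  TopologicalSpace.IsTopologicalBasis
    ((fun c : X => {x : X | c ≤ x}) '' {c : X | IsOpen {x : X | c ≤ x}})

/-- A topological space is scattered iff every nonempty subset has a point isolated in
the subspace topology. -/
def IsScatteredSpace (X : Type*) [TopologicalSpace X] : Prop :=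
  ∀ S : Set X, S.Nonempty → ∃ x ∈ S, ∃ U : Set X, IsOpen U ∧ U ∩ S = {x}

/-- Wadge reducibility: `A = f⁻¹(B)` for some continuous `f : X → X`. -/
def WadgeRed {X : Type*} [TopologicalSpace X] (A B : Set X) : Prop :=
  ∃ f : X → X, Continuous f ∧ A = f ⁻¹' B

/-! ### The witnessing finite poset -/

/-- A six element poset: bottoms `x0, x1, x2`, tops `x3, x4, x5`. -/
inductive X6 : Type
  | x0 | x1 | x2 | x3 | x4 | x5
  deriving DecidableEq

namespace X6

instance : Fintype X6 :=
  ⟨{.x0, .x1, .x2, .x3, .x4, .x5}, by intro x; cases x <;> decide⟩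

/-- The order: `x3` above `x1, x2`; `x4` above `x0, x2`; `x5` above `x0, x1`. -/
def le6 : X6 → X6 → Bool
  | .x0, .x4 => true | .x0, .x5 => true
  | .x1, .x3 => true | .x1, .x5 => true
  | .x2, .x3 => true | .x2, .x4 => true
  | a, b => a == b

lemma le6_refl : ∀ a, le6 a a = true := by decide
lemma le6_trans : ∀ a b c, le6 a b = true → le6 b c = true → le6 a c = true := by decide
lemma le6_antisymm : ∀ a b, le6 a b = true → le6 b a = true → a = b := by decide

instance instPO : PartialOrder X6 where
  le a b := le6 a b = true
  le_refl := le6_refl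
  le_trans := le6_trans
  le_antisymm := le6_antisymm

instance : DecidableRel ((· ≤ ·) : X6 → X6 → Prop) :=
  fun a b => inferInstanceAs (Decidable (le6 a b = true))

/-- The Alexandrov (upper-set) topology on `X6`. -/
instance instTop : TopologicalSpace X6 where
  IsOpen U := IsUpperSet U
  isOpen_univ := isUpperSet_univ
  isOpen_inter _ _ := IsUpperSet.inter
  isOpen_sUnion _ h := isUpperSet_sUnion h

lemma isOpen_iff_isUpperSet {U : Set X6} : IsOpen U ↔ IsUpperSet U := Iff.rfl

lemma isOpen_upset (c : X6) : IsOpen {x : X6 | c ≤ x} :=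
  fun _ _ hab hc => le_trans hc hab

/-- Every nonempty directed subset of `X6` has a greatest element. -/
lemma exists_greatest {d : Set X6} (hne : d.Nonempty) (hdir : DirectedOn (· ≤ ·) d) :
    ∃ m ∈ d, ∀ x ∈ d, x ≤ m := by
  obtain ⟨m, hm, hmax⟩ := Set.Finite.exists_maximalFor id d d.toFinite hne
  refine ⟨m, hm, fun x hx => ?_⟩
  obtain ⟨z, hz, hmz, hxz⟩ := hdir m hm x hx
  have : m = z := le_antisymm hmz (hmax hz hmz)
  exact this ▸ hxz

/-- Continuous self-maps of `X6` are monotone. -/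
lemma mono_of_continuous {f : X6 → X6} (hf : Continuous f) : Monotone f := by
  intro a b hab
  have hU : IsOpen {x : X6 | f a ≤ x} := isOpen_upset (f a)
  have hpre : IsUpperSet (f ⁻¹' {x : X6 | f a ≤ x}) := hf.isOpen_preimage _ hU
  exact hpre hab (le_refl (f a))

/-- Indicator of the set `A = {x1, x3}`. -/
def Ab : X6 → Bool
  | .x1 => true | .x3 => true | _ => false

/-- Indicator of the set `B = {x0, x1, x3}`. -/
def Bb : X6 → Bool
  | .x0 => true | .x1 => true | .x3 => true | _ => false

/-- `dchk P Q a0 … a5` decides whether the indicator `P` differs somewhere from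
`Q` composed with the map sending `xi` to `ai`. -/
def dchk (P Q : X6 → Bool) (a0 a1 a2 a3 a4 a5 : X6) : Bool :=
  (P .x0 != Q a0) || (P .x1 != Q a1) || (P .x2 != Q a2) ||
  (P .x3 != Q a3) || (P .x4 != Q a4) || (P .x5 != Q a5)

/-- Either the map `xi ↦ ai` is not monotone, or all twelve reducibility
equalities fail. -/
def check (a0 a1 a2 a3 a4 a5 : X6) : Bool :=
  !(le6 a0 a4 && le6 a0 a5 && le6 a1 a3 && le6 a1 a5 && le6 a2 a3 && le6 a2 a4) ||
  (dchk Ab (fun x => !Ab x) a0 a1 a2 a3 a4 a5 && dchk (fun x => !Ab x) Ab a0 a1 a2 a3 a4 a5 &&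
   dchk Bb (fun x => !Bb x) a0 a1 a2 a3 a4 a5 && dchk (fun x => !Bb x) Bb a0 a1 a2 a3 a4 a5 &&
   dchk Ab Bb a0 a1 a2 a3 a4 a5 && dchk Bb Ab a0 a1 a2 a3 a4 a5 &&
   dchk Ab (fun x => !Bb x) a0 a1 a2 a3 a4 a5 && dchk (fun x => !Bb x) Ab a0 a1 a2 a3 a4 a5 &&
   dchk (fun x => !Ab x) Bb a0 a1 a2 a3 a4 a5 && dchk Bb (fun x => !Ab x) a0 a1 a2 a3 a4 a5 &&
   dchk (fun x => !Ab x) (fun x => !Bb x) a0 a1 a2 a3 a4 a5 &&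
   dchk (fun x => !Bb x) (fun x => !Ab x) a0 a1 a2 a3 a4 a5)

set_option maxRecDepth 100000 in
set_option maxHeartbeats 4000000 in
lemma allcheck : ∀ a0 a1 a2 a3 a4 a5 : X6, check a0 a1 a2 a3 a4 a5 = true := by decide

/-- Shorthand: `dchk` applied along a map `f`. -/
def dchkf (P Q : X6 → Bool) (f : X6 → X6) : Bool :=
  dchk P Q (f .x0) (f .x1) (f .x2) (f .x3) (f .x4) (f .x5)

/-- From monotonicity, extract the big conjunction of `dchk`s. -/
lemma dchk_of_mono {f : X6 → X6} (hf : Monotone f) :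
    dchkf Ab (fun x => !Ab x) f = true ∧ dchkf (fun x => !Ab x) Ab f = true ∧
    dchkf Bb (fun x => !Bb x) f = true ∧ dchkf (fun x => !Bb x) Bb f = true ∧
    dchkf Ab Bb f = true ∧ dchkf Bb Ab f = true ∧
    dchkf Ab (fun x => !Bb x) f = true ∧ dchkf (fun x => !Bb x) Ab f = true ∧
    dchkf (fun x => !Ab x) Bb f = true ∧ dchkf Bb (fun x => !Ab x) f = true ∧
    dchkf (fun x => !Ab x) (fun x => !Bb x) f = true ∧
    dchkf (fun x => !Bb x) (fun x => !Ab x) f = true := by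
  have h := allcheck (f .x0) (f .x1) (f .x2) (f .x3) (f .x4) (f .x5)
  unfold check at h
  have e1 : le6 (f .x0) (f .x4) = true := hf (show x0 ≤ x4 by decide)
  have e2 : le6 (f .x0) (f .x5) = true := hf (show x0 ≤ x5 by decide)
  have e3 : le6 (f .x1) (f .x3) = true := hf (show x1 ≤ x3 by decide)
  have e4 : le6 (f .x1) (f .x5) = true := hf (show x1 ≤ x5 by decide)
  have e5 : le6 (f .x2) (f .x3) = true := hf (show x2 ≤ x3 by decide)
  have e6 : le6 (f .x2) (f .x4) = true := hf (show x2 ≤ x4 by decide)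
  rw [e1, e2, e3, e4, e5, e6] at h
  simp only [Bool.and_true, Bool.not_true, Bool.false_or, Bool.and_eq_true] at h
  unfold dchkf
  tauto

/-- The sets `A` and `B`. -/
def Aset : Set X6 := {x | Ab x = true}
def Bset : Set X6 := {x | Bb x = true}

/-- If `dchkf P Q f` holds, then `{x | P x} ≠ f⁻¹ {x | Q x}`. -/
lemma ne_of_dchk {P Q : X6 → Bool} {f : X6 → X6} (h : dchkf P Q f = true) :
    {x : X6 | P x = true} ≠ f ⁻¹' {x : X6 | Q x = true} := by
  intro hEq
  have hall : ∀ x, P x = Q (f x) := by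
    intro x
    have hx := Set.ext_iff.mp hEq x
    simp only [Set.mem_setOf_eq, Set.mem_preimage] at hx
    rcases Bool.eq_false_or_eq_true (P x) with hp | hp <;>
      rcases Bool.eq_false_or_eq_true (Q (f x)) with hq | hq <;> simp_all
  unfold dchkf dchk at h
  rw [hall .x0, hall .x1, hall .x2, hall .x3, hall .x4, hall .x5] at h
  simp at h

lemma compl_eq (P : X6 → Bool) :
    ({x : X6 | P x = true} : Set X6)ᶜ = {x : X6 | (!P x) = true} := by
  ext x; simp [Set.mem_compl_iff]

end X6

/-- There is a scattered ω-algebraic domain `X` with subsets `A`, `B` such that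
`A, B, Aᶜ, Bᶜ` are pairwise Wadge incomparable. -/
theorem exists_scattered_domain_wadge_antichain :
    ∃ (X : Type) (po : PartialOrder X) (t : TopologicalSpace X),
      @IsOmegaAlgebraicDomain X po t ∧ @IsScatteredSpace X t ∧
      ∃ A B : Set X,
        ¬ @WadgeRed X t A Aᶜ ∧ ¬ @WadgeRed X t Aᶜ A ∧
        ¬ @WadgeRed X t B Bᶜ ∧ ¬ @WadgeRed X t Bᶜ B ∧
        ¬ @WadgeRed X t A B ∧ ¬ @WadgeRed X t B A ∧
        ¬ @WadgeRed X t A Bᶜ ∧ ¬ @WadgeRed X t Bᶜ A ∧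
        ¬ @WadgeRed X t Aᶜ B ∧ ¬ @WadgeRed X t B Aᶜ ∧
        ¬ @WadgeRed X t Aᶜ Bᶜ ∧ ¬ @WadgeRed X t Bᶜ Aᶜ := by
  refine ⟨X6, X6.instPO, X6.instTop, ?_, ?_, X6.Aset, X6.Bset, ?_, ?_, ?_, ?_, ?_, ?_, ?_, ?_,
    ?_, ?_, ?_, ?_⟩
  · -- ω-algebraic domain
    refine ⟨?_, ?_, Set.to_countable _, ?_⟩
    · intro d hne hdir
      obtain ⟨m, hm, hub⟩ := X6.exists_greatest hne hdir
      exact ⟨m, fun x hx => hub x hx, fun b hb => hb hm⟩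
    · intro U
      constructor
      · intro hU
        refine ⟨hU, fun d hne hdir a hlub ha => ?_⟩
        obtain ⟨m, hm, hub⟩ := X6.exists_greatest hne hdir
        have ham : a ≤ m := hlub.2 (fun x hx => hub x hx)
        have hma : m ≤ a := hlub.1 hm
        have : m = a := le_antisymm hma ham
        exact ⟨m, hm, this ▸ ha⟩
      · exact fun h => h.1
    · refine TopologicalSpace.isTopologicalBasis_of_isOpen_of_nhds ?_ ?_
      · rintro u ⟨c, hc, rfl⟩; exact hc
      · intro a u hau hu
        exact ⟨{x : X6 | a ≤ x}, ⟨a, X6.isOpen_upset a, rfl⟩, le_refl a,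
          fun y hy => hu hy hau⟩
  · -- scattered
    intro S hS
    obtain ⟨x, hx, hmax⟩ := Set.Finite.exists_maximalFor id S S.toFinite hS
    refine ⟨x, hx, {y : X6 | x ≤ y}, X6.isOpen_upset x, ?_⟩
    ext y
    constructor
    · rintro ⟨hxy, hyS⟩
      exact Set.mem_singleton_iff.mpr (le_antisymm (hmax hyS hxy) hxy)
    · rintro rfl
      exact ⟨le_refl y, hx⟩
  all_goals {
    rintro ⟨f, hf, hEq⟩
    have hm := X6.mono_of_continuous hf
    obtain ⟨h1, h2, h3, h4, h5, h6, h7, h8, h9, h10, h11, h12⟩ := X6.dchk_of_mono hm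
    simp only [X6.Aset, X6.Bset, X6.compl_eq] at hEq
    first
      | exact X6.ne_of_dchk h1 hEq | exact X6.ne_of_dchk h2 hEq
      | exact X6.ne_of_dchk h3 hEq | exact X6.ne_of_dchk h4 hEq
      | exact X6.ne_of_dchk h5 hEq | exact X6.ne_of_dchk h6 hEq
      | exact X6.ne_of_dchk h7 hEq | exact X6.ne_of_dchk h8 hEq
      | exact X6.ne_of_dchk h9 hEq | exact X6.ne_of_dchk h10 hEq
      | exact X6.ne_of_dchk h11 hEq | exact X6.ne_of_dchk h12 hEq
  }
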